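/- Let q and p be Borel probability measures on a finite-dimensional real inner product space E (e.g. EuclideanSpace ℝ (Fin d)), each with finite second moment. Let μ = ∫ s dp(s) be the mean of p and Var(p) = ∫ ‖s − μ‖² dp(s) its variance. If ŝ and s are independent random vectors with laws q and p respectively, then 𝔼[‖ŝ − s‖²] ≤ 2·W₂²(q, p) + 4·Var(p). -/

import Mathlib

open MeasureTheory ProbabilityTheory

/-- The squared 2-Wasserstein distance between two measures: the infimum over all
couplings `π` (measures on `E × E` with first marginal `μ` and second marginal `ν`)
of `∫ ‖x - y‖² dπ(x, y)`. -/
noncomputable def W2sq {E : Type*} [NormedAddCommGroup E] [MeasurableSpace E]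
    (μ ν : Measure E) : ℝ :=
  sInf {c : ℝ | ∃ π : Measure (E × E), IsProbabilityMeasure π ∧
    π.map Prod.fst = μ ∧ π.map Prod.snd = ν ∧ c = ∫ p, ‖p.1 - p.2‖ ^ 2 ∂π}

section Aux

variable {E : Type*} [NormedAddCommGroup E] [InnerProductSpace ℝ E]
  [FiniteDimensional ℝ E] [MeasurableSpace E] [BorelSpace E]

/-- Three-point inequality for squared norms. -/
lemma sq_norm_sub_le_aux (a b c : E) :
    ‖a - b‖ ^ 2 ≤ 2 * ‖a - c‖ ^ 2 + 2 * ‖c - b‖ ^ 2 := by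
  have h : ‖a - b‖ ≤ ‖a - c‖ + ‖c - b‖ := by
    have := dist_triangle a c b
    simpa [dist_eq_norm] using this
  nlinarith [norm_nonneg (a - b), norm_nonneg (a - c), norm_nonneg (c - b),
    sq_nonneg (‖a - c‖ - ‖c - b‖)]

lemma integrable_id_of_sq {p : Measure E} [IsProbabilityMeasure p]
    (hp2 : Integrable (fun x => ‖x‖ ^ 2) p) : Integrable (fun x : E => x) p := by
  refine ((integrable_const (1 : ℝ)).add hp2).mono' aestronglyMeasurable_id ?_
  filter_upwards with x
  have h : ‖x‖ ≤ 1 + ‖x‖ ^ 2 := by nlinarith [norm_nonneg x, sq_nonneg (‖x‖ - 1)]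
  simpa using h

lemma integrable_sq_shift {p : Measure E} [IsProbabilityMeasure p]
    (hp2 : Integrable (fun x => ‖x‖ ^ 2) p) (c : E) :
    Integrable (fun x => ‖x - c‖ ^ 2) p := by
  refine ((hp2.const_mul 2).add (integrable_const (2 * ‖c‖ ^ 2))).mono'
    (((continuous_id.sub continuous_const).norm.pow 2).aestronglyMeasurable) ?_
  filter_upwards with x
  have h : ‖x - c‖ ≤ ‖x‖ + ‖c‖ := norm_sub_le x c
  have hnn : (0 : ℝ) ≤ ‖x - c‖ ^ 2 := by positivity
  rw [Real.norm_eq_abs, abs_of_nonneg hnn]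
  simp only [Pi.add_apply]
  nlinarith [norm_nonneg (x - c), norm_nonneg x, norm_nonneg c, sq_nonneg (‖x‖ - ‖c‖)]

/-- The squared-distance cost is integrable w.r.t. any coupling of measures
with finite second moments. -/
lemma integrable_cost_of_coupling {q p : Measure E}
    (hq2 : Integrable (fun x => ‖x‖ ^ 2) q) (hp2 : Integrable (fun x => ‖x‖ ^ 2) p)
    (π : Measure (E × E)) [IsProbabilityMeasure π]
    (h1 : π.map Prod.fst = q) (h2 : π.map Prod.snd = p) :
    Integrable (fun z : E × E => ‖z.1 - z.2‖ ^ 2) π := by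
  have hf1 : Integrable (fun z : E × E => ‖z.1‖ ^ 2) π := by
    have := (integrable_map_measure (f := (Prod.fst : E × E → E))
      (g := fun x : E => ‖x‖ ^ 2)
      ((continuous_norm.pow 2).aestronglyMeasurable)
      measurable_fst.aemeasurable).1 (by rw [h1]; exact hq2)
    exact this
  have hf2 : Integrable (fun z : E × E => ‖z.2‖ ^ 2) π := by
    have := (integrable_map_measure (f := (Prod.snd : E × E → E))
      (g := fun x : E => ‖x‖ ^ 2)
      ((continuous_norm.pow 2).aestronglyMeasurable)
      measurable_snd.aemeasurable).1 (by rw [h2]; exact hp2)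
    exact this
  refine ((hf1.const_mul 2).add (hf2.const_mul 2)).mono'
    (((continuous_fst.sub continuous_snd).norm.pow 2).aestronglyMeasurable) ?_
  filter_upwards with z
  have h : ‖z.1 - z.2‖ ≤ ‖z.1‖ + ‖z.2‖ := norm_sub_le _ _
  have hnn : (0 : ℝ) ≤ ‖z.1 - z.2‖ ^ 2 := by positivity
  rw [Real.norm_eq_abs, abs_of_nonneg hnn]
  simp only [Pi.add_apply]
  nlinarith [norm_nonneg (z.1 - z.2), norm_nonneg z.1, norm_nonneg z.2,
    sq_nonneg (‖z.1‖ - ‖z.2‖)]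

/-- The expected squared distance between two independent samples from `p`
equals twice the variance of `p`. -/
lemma prod_integral_sq_sub (p : Measure E) [IsProbabilityMeasure p]
    (hp2 : Integrable (fun x => ‖x‖ ^ 2) p) :
    ∫ z : E × E, ‖z.1 - z.2‖ ^ 2 ∂(p.prod p)
      = 2 * ∫ x, ‖x - ∫ y, y ∂p‖ ^ 2 ∂p := by
  set m := ∫ y, y ∂p with hm
  have hid : Integrable (fun x : E => x) p := integrable_id_of_sq hp2
  have hsubm : Integrable (fun x : E => x - m) p := hid.sub (integrable_const m)
  have hmean0 : ∫ x, (x - m) ∂p = 0 := by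
    rw [integral_sub hid (integrable_const m), integral_const, probReal_univ,
      one_smul, ← hm, sub_self]
  have hVint : Integrable (fun x => ‖x - m‖ ^ 2) p := integrable_sq_shift hp2 m
  have hcost : Integrable (fun z : E × E => ‖z.1 - z.2‖ ^ 2) (p.prod p) :=
    integrable_cost_of_coupling hp2 hp2 _
      (by simp [Measure.map_fst_prod, measure_univ])
      (by simp [Measure.map_snd_prod, measure_univ])
  rw [MeasureTheory.integral_prod _ hcost]
  have key : ∀ y : E, ∫ y', ‖y - y'‖ ^ 2 ∂p = ‖y - m‖ ^ 2 + ∫ x, ‖x - m‖ ^ 2 ∂p := by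
    intro y
    have hinner : Integrable (fun y' : E => (inner ℝ (y - m) (y' - m) : ℝ)) p :=
      hsubm.const_inner _
    have expand : ∀ y' : E, ‖y - y'‖ ^ 2
        = ‖y - m‖ ^ 2 - 2 * (inner ℝ (y - m) (y' - m) : ℝ) + ‖y' - m‖ ^ 2 := by
      intro y'
      have h := norm_sub_sq_real (y - m) (y' - m)
      rwa [sub_sub_sub_cancel_right] at h
    calc ∫ y', ‖y - y'‖ ^ 2 ∂p
        = ∫ y', (‖y - m‖ ^ 2 - 2 * (inner ℝ (y - m) (y' - m) : ℝ) + ‖y' - m‖ ^ 2) ∂p :=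
          integral_congr_ae (Filter.Eventually.of_forall fun y' => expand y')
      _ = ‖y - m‖ ^ 2 + ∫ x, ‖x - m‖ ^ 2 ∂p := by
          have hconst : Integrable (fun _ : E => ‖y - m‖ ^ 2) p := integrable_const _
          have hsum : Integrable
              (fun y' : E => ‖y - m‖ ^ 2 - 2 * (inner ℝ (y - m) (y' - m) : ℝ)) p :=
            hconst.sub (hinner.const_mul 2)
          rw [integral_add hsum hVint, integral_sub hconst (hinner.const_mul 2),
            integral_const, probReal_univ, one_smul,
            integral_const_mul, integral_inner hsubm, hmean0,
            inner_zero_right]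
          ring
  calc ∫ y, ∫ y', ‖y - y'‖ ^ 2 ∂p ∂p
      = ∫ y, (‖y - m‖ ^ 2 + ∫ x, ‖x - m‖ ^ 2 ∂p) ∂p :=
        integral_congr_ae (Filter.Eventually.of_forall fun y => key y)
    _ = 2 * ∫ x, ‖x - m‖ ^ 2 ∂p := by
        rw [integral_add hVint (integrable_const _), integral_const, probReal_univ,
          one_smul]
        ring

end Aux

/-- **Single-sample expectation error bound.** If `q` and `p` are Borel probability
measures with finite second moment on a finite-dimensional real inner product space,
and `ŝ`, `s` are independent random vectors with laws `q` and `p` respectively, then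
`𝔼[‖ŝ - s‖²] ≤ 2 W₂²(q, p) + 4 Var(p)`. -/
theorem single_sample_error_bound
    {E : Type*} [NormedAddCommGroup E] [InnerProductSpace ℝ E]
    [FiniteDimensional ℝ E] [MeasurableSpace E] [BorelSpace E]
    (q p : Measure E) [IsProbabilityMeasure q] [IsProbabilityMeasure p]
    (hq2 : Integrable (fun x => ‖x‖ ^ 2) q) (hp2 : Integrable (fun x => ‖x‖ ^ 2) p)
    {Ω : Type*} [MeasurableSpace Ω] (P : Measure Ω) [IsProbabilityMeasure P]
    (shat s : Ω → E) (hshat : AEMeasurable shat P) (hs : AEMeasurable s P)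
    (hlawq : P.map shat = q) (hlawp : P.map s = p)
    (hindep : IndepFun shat s P) :
    ∫ ω, ‖shat ω - s ω‖ ^ 2 ∂P ≤
      2 * W2sq q p + 4 * ∫ x, ‖x - ∫ y, y ∂p‖ ^ 2 ∂p := by
  set V : ℝ := ∫ x, ‖x - ∫ y, y ∂p‖ ^ 2 ∂p with hV
  set I : ℝ := ∫ z : E × E, ‖z.1 - z.2‖ ^ 2 ∂(q.prod p) with hI
  have hmeas_cost : ∀ μ : Measure (E × E),
      AEStronglyMeasurable (fun z : E × E => ‖z.1 - z.2‖ ^ 2) μ := fun μ =>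
    ((continuous_fst.sub continuous_snd).norm.pow 2).aestronglyMeasurable
  -- Step 1: identify the LHS with an integral over the product measure.
  have hjoint : P.map (fun ω => (shat ω, s ω)) = q.prod p := by
    rw [← hlawq, ← hlawp]
    exact (indepFun_iff_map_prod_eq_prod_map_map hshat hs).1 hindep
  have hLHS : ∫ ω, ‖shat ω - s ω‖ ^ 2 ∂P = I := by
    rw [hI, ← hjoint, integral_map (hshat.prodMk hs) (by rw [hjoint]; exact hmeas_cost _)]
  rw [hLHS]
  -- Step 2: the double-sample variance identity.
  have hprodvar : ∫ z : E × E, ‖z.1 - z.2‖ ^ 2 ∂(p.prod p) = 2 * V :=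
    prod_integral_sq_sub p hp2
  have hcostpp : Integrable (fun z : E × E => ‖z.1 - z.2‖ ^ 2) (p.prod p) :=
    integrable_cost_of_coupling hp2 hp2 _
      (by simp [Measure.map_fst_prod, measure_univ])
      (by simp [Measure.map_snd_prod, measure_univ])
  have hcostqp : Integrable (fun z : E × E => ‖z.1 - z.2‖ ^ 2) (q.prod p) :=
    integrable_cost_of_coupling hq2 hp2 _
      (by simp [Measure.map_fst_prod, measure_univ])
      (by simp [Measure.map_snd_prod, measure_univ])
  -- Step 3: bound against every coupling.
  have hinf : (I - 4 * V) / 2 ≤ W2sq q p := by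
    apply le_csInf
    · exact ⟨I, q.prod p, inferInstance,
        (by simp [Measure.map_fst_prod, measure_univ]),
        (by simp [Measure.map_snd_prod, measure_univ]), hI⟩
    · rintro c ⟨π, hπ, hπ1, hπ2, rfl⟩
      haveI := hπ
      have hcostπ : Integrable (fun z : E × E => ‖z.1 - z.2‖ ^ 2) π :=
        integrable_cost_of_coupling hq2 hp2 π hπ1 hπ2
      -- work on ρ = π.prod p
      set ρ : Measure ((E × E) × E) := π.prod p with hρ
      haveI : IsProbabilityMeasure ρ := by rw [hρ]; infer_instance
      -- the three relevant maps
      have hmapG : ρ.map Prod.fst = π := by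
        rw [hρ, Measure.map_fst_prod, measure_univ, one_smul]
      have hmapF : ρ.map (fun w : (E × E) × E => (w.1.1, w.2)) = q.prod p := by
        have : (fun w : (E × E) × E => (w.1.1, w.2))
            = Prod.map (Prod.fst : E × E → E) (id : E → E) := rfl
        rw [this, hρ, ← Measure.map_prod_map _ _ measurable_fst measurable_id,
          hπ1, Measure.map_id]
      have hmapH : ρ.map (fun w : (E × E) × E => (w.1.2, w.2)) = p.prod p := by
        have : (fun w : (E × E) × E => (w.1.2, w.2))
            = Prod.map (Prod.snd : E × E → E) (id : E → E) := rfl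
        rw [this, hρ, ← Measure.map_prod_map _ _ measurable_snd measurable_id,
          hπ2, Measure.map_id]
      -- the three integrals over ρ
      have hF : ∫ w : (E × E) × E, ‖w.1.1 - w.2‖ ^ 2 ∂ρ = I := by
        rw [hI, ← hmapF, integral_map
          ((measurable_fst.fst.prodMk measurable_snd).aemeasurable)
          (by rw [hmapF]; exact hmeas_cost _)]
      have hG : ∫ w : (E × E) × E, ‖w.1.1 - w.1.2‖ ^ 2 ∂ρ
          = ∫ z : E × E, ‖z.1 - z.2‖ ^ 2 ∂π := by
        rw [← hmapG, integral_map measurable_fst.aemeasurable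
          (by rw [hmapG]; exact hmeas_cost _)]
      have hH : ∫ w : (E × E) × E, ‖w.1.2 - w.2‖ ^ 2 ∂ρ = 2 * V := by
        rw [← hprodvar, ← hmapH, integral_map
          ((measurable_fst.snd.prodMk measurable_snd).aemeasurable)
          (by rw [hmapH]; exact hmeas_cost _)]
      -- integrabilities over ρ
      have hFi : Integrable (fun w : (E × E) × E => ‖w.1.1 - w.2‖ ^ 2) ρ := by
        have := (integrable_map_measure (f := fun w : (E × E) × E => (w.1.1, w.2))
          (g := fun z : E × E => ‖z.1 - z.2‖ ^ 2)
          (hmeas_cost _) ((measurable_fst.fst.prodMk measurable_snd).aemeasurable)).1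
          (by rw [hmapF]; exact hcostqp)
        exact this
      have hGi : Integrable (fun w : (E × E) × E => ‖w.1.1 - w.1.2‖ ^ 2) ρ := by
        have := (integrable_map_measure (f := (Prod.fst : (E × E) × E → E × E))
          (g := fun z : E × E => ‖z.1 - z.2‖ ^ 2)
          (hmeas_cost _) measurable_fst.aemeasurable).1
          (by rw [hmapG]; exact hcostπ)
        exact this
      have hHi : Integrable (fun w : (E × E) × E => ‖w.1.2 - w.2‖ ^ 2) ρ := by
        have := (integrable_map_measure (f := fun w : (E × E) × E => (w.1.2, w.2))
          (g := fun z : E × E => ‖z.1 - z.2‖ ^ 2)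
          (hmeas_cost _) ((measurable_fst.snd.prodMk measurable_snd).aemeasurable)).1
          (by rw [hmapH]; exact hcostpp)
        exact this
      -- pointwise bound and conclusion
      have hbound : ∫ w : (E × E) × E, ‖w.1.1 - w.2‖ ^ 2 ∂ρ
          ≤ ∫ w : (E × E) × E,
              (2 * ‖w.1.1 - w.1.2‖ ^ 2 + 2 * ‖w.1.2 - w.2‖ ^ 2) ∂ρ := by
        refine integral_mono_ae hFi ((hGi.const_mul 2).add (hHi.const_mul 2)) ?_
        filter_upwards with w
        exact sq_norm_sub_le_aux w.1.1 w.2 w.1.2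
      rw [hF] at hbound
      rw [integral_add (hGi.const_mul 2) (hHi.const_mul 2),
        integral_const_mul, integral_const_mul, hG, hH] at hbound
      linarith
  have hW : W2sq q p = sInf _ := rfl
  linarith [hinf]
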